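/- arXiv:2302.09653 — 6 statements merged into one kernel-verified Lean document; each statement's English description precedes it below -/
import Mathlib

section
/- Let A and B be points of the Euclidean plane with ‖A‖ = ‖B‖ = r_e, let M = (A+B)/2 be their midpoint and ℓ = ‖M‖. If 0 < r_c ≤ r_e and ℓ < r_c, then the coverage proportion of the trajectory, namely the 1-dimensional Hausdorff measure of (segment[A,B] ∩ closedBall(0, r_c)) divided by dist(A,B), equals √((r_c² − ℓ²)/(r_e² − ℓ²)). (Proposition 1 of the paper.) -/
open MeasureTheory Metric

set_option maxHeartbeats 1000000

/-- **Proposition 1 (Coverage proportion).** For a chord of the environment circle of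
radius `r_e` with endpoints `A`, `B`, midpoint `M = (A+B)/2` and `ℓ = ‖M‖`, if
`0 < r_c ≤ r_e` and `ℓ < r_c`, then the coverage proportion
`μH¹(segment[A,B] ∩ closedBall(0, r_c)) / dist(A,B)` equals `√((r_c² − ℓ²)/(r_e² − ℓ²))`. -/
theorem coverage_proportion (r_e r_c : ℝ) (hrc : 0 < r_c) (hce : r_c ≤ r_e)
    (A B : EuclideanSpace ℝ (Fin 2)) (hA : ‖A‖ = r_e) (hB : ‖B‖ = r_e)
    (M : EuclideanSpace ℝ (Fin 2)) (hM : M = midpoint ℝ A B)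
    (ℓ : ℝ) (hℓ : ℓ = ‖M‖) (hℓc : ℓ < r_c) :
    (μH[1] (segment ℝ A B ∩ closedBall (0 : EuclideanSpace ℝ (Fin 2)) r_c)).toReal
      / dist A B = Real.sqrt ((r_c ^ 2 - ℓ ^ 2) / (r_e ^ 2 - ℓ ^ 2)) := by
  have hre : 0 < r_e := lt_of_lt_of_le hrc hce
  have hℓ0 : 0 ≤ ℓ := hℓ ▸ norm_nonneg M
  have horth : inner ℝ M (B - A) = (0:ℝ) := by
    rw [hM, midpoint_eq_smul_add, real_inner_smul_left, inner_sub_right, inner_add_left,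
      inner_add_left, real_inner_comm B A, real_inner_self_eq_norm_sq,
      real_inner_self_eq_norm_sq, hA, hB]
    ring
  set d := dist A B with hd
  have hdn : d = ‖B - A‖ := by rw [hd, dist_eq_norm, norm_sub_rev]
  have key : ∀ t : ℝ, ‖(AffineMap.lineMap A B t : EuclideanSpace ℝ (Fin 2))‖ ^ 2
      = ℓ ^ 2 + (t - 1/2) ^ 2 * d ^ 2 := by
    intro t
    have h1 : (AffineMap.lineMap A B t : EuclideanSpace ℝ (Fin 2))
        = M + (t - 1/2) • (B - A) := by
      rw [AffineMap.lineMap_apply_module, hM, midpoint_eq_smul_add, invOf_eq_inv]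
      module
    rw [h1, norm_add_sq_real, real_inner_smul_right, horth, mul_zero, norm_smul,
      Real.norm_eq_abs, mul_pow, sq_abs, hℓ, hdn]
    ring
  have hre2 : r_e ^ 2 = ℓ ^ 2 + d ^ 2 / 4 := by
    have h0 := key 0
    rw [AffineMap.lineMap_apply_zero, hA] at h0
    linarith [h0]
  have hℓre : ℓ ^ 2 < r_e ^ 2 := by nlinarith
  have hdpos : 0 < d := by nlinarith [dist_nonneg (x := A) (y := B)]
  set c := Real.sqrt (r_c ^ 2 - ℓ ^ 2) with hcdef
  have hc2 : c ^ 2 = r_c ^ 2 - ℓ ^ 2 := Real.sq_sqrt (by nlinarith)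
  have hcpos : 0 < c := Real.sqrt_pos.mpr (by nlinarith)
  set s := c / d with hsdef
  have hspos : 0 < s := div_pos hcpos hdpos
  have hsd : s * d = c := div_mul_cancel₀ c hdpos.ne'
  have hs2d2 : s ^ 2 * d ^ 2 = c ^ 2 := by rw [← hsd]; ring
  have hshalf : s ≤ 1/2 := by
    rw [hsdef, div_le_iff₀ hdpos]
    nlinarith [hc2, hcpos.le, hre2]
  clear_value d c s
  have hIcc : Set.Icc (0:ℝ) 1
        ∩ (AffineMap.lineMap A B) ⁻¹' closedBall (0 : EuclideanSpace ℝ (Fin 2)) r_c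
      = Set.Icc (1/2 - s) (1/2 + s) := by
    ext t
    simp only [Set.mem_inter_iff, Set.mem_Icc, Set.mem_preimage, mem_closedBall,
      dist_zero_right]
    constructor
    · rintro ⟨⟨ht0, ht1⟩, hball⟩
      have hk := key t
      have hnn := norm_nonneg (AffineMap.lineMap A B t : EuclideanSpace ℝ (Fin 2))
      generalize hxd : ‖(AffineMap.lineMap A B t : EuclideanSpace ℝ (Fin 2))‖ = x at hk hball hnn
      have hn2 : x ^ 2 ≤ r_c ^ 2 := pow_le_pow_left₀ hnn hball 2
      have h2 : (t - 1/2) ^ 2 * d ^ 2 ≤ s ^ 2 * d ^ 2 := by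
        rw [hs2d2]; linarith
      have h3 : (t - 1/2) ^ 2 ≤ s ^ 2 :=
        le_of_mul_le_mul_right h2 (pow_pos hdpos 2)
      constructor <;> nlinarith [sq_nonneg (t - 1/2 + s), sq_nonneg (t - 1/2 - s)]
    · rintro ⟨ht0, ht1⟩
      have hk := key t
      have hnn := norm_nonneg (AffineMap.lineMap A B t : EuclideanSpace ℝ (Fin 2))
      refine ⟨⟨by linarith, by linarith⟩, ?_⟩
      generalize hxd : ‖(AffineMap.lineMap A B t : EuclideanSpace ℝ (Fin 2))‖ = x at hk hnn ⊢
      have h3 : (t - 1/2) ^ 2 ≤ s ^ 2 := by nlinarith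
      have hn2 : x ^ 2 ≤ r_c ^ 2 := by
        nlinarith [hs2d2, mul_le_mul_of_nonneg_right h3 (sq_nonneg d)]
      exact le_of_pow_le_pow_left₀ two_ne_zero hrc.le hn2
  have himg : segment ℝ A B ∩ closedBall (0 : EuclideanSpace ℝ (Fin 2)) r_c
      = segment ℝ (AffineMap.lineMap A B (1/2 - s) : EuclideanSpace ℝ (Fin 2))
          (AffineMap.lineMap A B (1/2 + s)) := by
    rw [segment_eq_image_lineMap, ← Set.image_inter_preimage, hIcc,
      ← segment_eq_Icc (by linarith : (1:ℝ)/2 - s ≤ 1/2 + s), image_segment]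
  rw [himg, hausdorffMeasure_segment, ← dist_edist, dist_lineMap_lineMap]
  have habs : |(1/2 - s) - (1/2 + s)| = 2 * s := by
    rw [abs_sub_comm, abs_of_nonneg (by linarith)]; ring
  rw [Real.dist_eq, habs, ← hd]
  have hdval : d = 2 * Real.sqrt (r_e ^ 2 - ℓ ^ 2) := by
    have h4 : d ^ 2 = (2 * Real.sqrt (r_e ^ 2 - ℓ ^ 2)) ^ 2 := by
      rw [mul_pow, Real.sq_sqrt (by linarith)]; linarith
    nlinarith [Real.sqrt_nonneg (r_e ^ 2 - ℓ ^ 2), hdpos]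
  rw [Real.sqrt_div (by nlinarith : (0:ℝ) ≤ r_c ^ 2 - ℓ ^ 2), ← hcdef, hsdef, hdval]
  have hsq : Real.sqrt (r_e ^ 2 - ℓ ^ 2) ≠ 0 := ne_of_gt (Real.sqrt_pos.mpr (by linarith))
  field_simp
end

section
/- Let A and B be points of the Euclidean plane with ‖A‖ = ‖B‖ = r_e, let M = (A+B)/2 and ℓ = ‖M‖, and suppose 0 < r_c ≤ r_e and ℓ < r_c. Then the 1-dimensional Hausdorff measure of segment[A,B] ∩ closedBall(0, r_c) equals 2√(r_c² − ℓ²); that is, the portion of the chord lying inside the coverage area has length 2√(r_c² − ℓ²). -/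
open MeasureTheory Metric

set_option maxHeartbeats 1000000

/-- **Inside-length computation.** For a chord of the circle of radius `r_e` with
endpoints `A`, `B`, midpoint `M = (A+B)/2` and `ℓ = ‖M‖`, if `0 < r_c ≤ r_e` and
`ℓ < r_c`, then the 1-dimensional Hausdorff measure of
`segment[A,B] ∩ closedBall(0, r_c)` equals `2√(r_c² − ℓ²)`. -/
theorem covered_length (r_e r_c : ℝ) (hrc : 0 < r_c) (hce : r_c ≤ r_e)
    (A B : EuclideanSpace ℝ (Fin 2)) (hA : ‖A‖ = r_e) (hB : ‖B‖ = r_e)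
    (M : EuclideanSpace ℝ (Fin 2)) (hM : M = midpoint ℝ A B)
    (ℓ : ℝ) (hℓ : ℓ = ‖M‖) (hℓc : ℓ < r_c) :
    μH[1] (segment ℝ A B ∩ closedBall (0 : EuclideanSpace ℝ (Fin 2)) r_c)
      = ENNReal.ofReal (2 * Real.sqrt (r_c ^ 2 - ℓ ^ 2)) := by
  set D := B - A with hD
  have hℓ0 : 0 ≤ ℓ := hℓ ▸ norm_nonneg M
  have hM2 : M = A + (1/2 : ℝ) • D := by
    rw [hM, midpoint_eq_smul_add, invOf_eq_inv, hD]
    module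
  -- inner M D = 0
  have hMD : inner ℝ M D = (0:ℝ) := by
    rw [hM, midpoint_eq_smul_add, invOf_eq_inv, hD, real_inner_smul_left]
    have : inner ℝ (A + B) (B - A) = (0:ℝ) := by
      rw [inner_add_left, inner_sub_right, inner_sub_right,
        real_inner_self_eq_norm_sq, real_inner_self_eq_norm_sq,
        real_inner_comm A B, hA, hB]
      ring
    rw [this, mul_zero]
  have hnorm : ∀ s : ℝ, ‖M + s • D‖^2 = ℓ^2 + s^2 * ‖D‖^2 := by
    intro s
    rw [norm_add_sq_real, real_inner_smul_right, hMD, norm_smul, hℓ]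
    simp [mul_pow, sq_abs]
  -- ‖D‖² = 4(r_e² - ℓ²)
  have hAB : ‖A + B‖ = 2 * ℓ := by
    have h : A + B = (2:ℝ) • M := by
      rw [hM, midpoint_eq_smul_add, invOf_eq_inv]; module
    rw [h, norm_smul, hℓ]
    simp
  have hD2 : ‖D‖^2 = 4 * (r_e^2 - ℓ^2) := by
    have h1 := norm_add_sq_real A B
    have h2 := norm_sub_sq_real B A
    have hBA : (inner ℝ A B : ℝ) = inner ℝ B A := real_inner_comm B A
    rw [← hD] at h2
    rw [hAB, hA, hB] at h1
    rw [hA, hB] at h2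
    nlinarith [h1, h2, hBA]
  have hℓre : ℓ < r_e := lt_of_lt_of_le hℓc hce
  have hDpos : 0 < ‖D‖ := by nlinarith [norm_nonneg D, hD2]
  set s0 : ℝ := Real.sqrt (r_c^2 - ℓ^2) with hs0
  have hs0pos : 0 < s0 := Real.sqrt_pos.mpr (by nlinarith)
  have hs0sq : s0^2 = r_c^2 - ℓ^2 := Real.sq_sqrt (by nlinarith)
  set c : ℝ := s0 / ‖D‖ with hc
  have hcpos : 0 < c := div_pos hs0pos hDpos
  have hcD : c * ‖D‖ = s0 := div_mul_cancel₀ _ hDpos.ne'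
  have hchalf : c ≤ 1/2 := by
    rw [hc, div_le_iff₀ hDpos]
    nlinarith [hs0sq, hD2, hs0pos.le, hDpos.le]
  set P : EuclideanSpace ℝ (Fin 2) := M + (-c) • D with hP
  set Q : EuclideanSpace ℝ (Fin 2) := M + c • D with hQ
  have hQP : Q - P = (2*c) • D := by rw [hP, hQ]; module
  have hseg : segment ℝ A B ∩ closedBall (0 : EuclideanSpace ℝ (Fin 2)) r_c
      = segment ℝ P Q := by
    ext x
    constructor
    · rintro ⟨hx1, hx2⟩
      rw [segment_eq_image'] at hx1
      obtain ⟨t, ht, rfl⟩ := hx1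
      rw [← hD]
      have hxM : A + t • D = M + (t - 1/2) • D := by rw [hM2]; module
      have hxnorm : ℓ^2 + (t - 1/2)^2 * ‖D‖^2 ≤ r_c^2 := by
        rw [← hnorm, ← hxM]
        have h := mem_closedBall_zero_iff.mp hx2
        rw [← hD] at h
        nlinarith [norm_nonneg (A + t • D)]
      have habs : (t - 1/2)^2 ≤ c^2 := by
        have hc2 : c^2 * ‖D‖^2 = s0^2 := by rw [← mul_pow, hcD]
        nlinarith [sq_nonneg ‖D‖, mul_pos hDpos hDpos]
      have hlow : -c ≤ t - 1/2 := by nlinarith [sq_nonneg (t - 1/2 + c)]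
      have hhigh : t - 1/2 ≤ c := by nlinarith [sq_nonneg (t - 1/2 - c)]
      rw [segment_eq_image']
      refine ⟨(t - 1/2 + c) / (2*c), ⟨?_, ?_⟩, ?_⟩
      · apply div_nonneg (by linarith) (by linarith)
      · rw [div_le_one (by linarith)]; linarith
      · beta_reduce
        rw [hQP, hxM, hP, smul_smul,
          div_mul_cancel₀ _ (by positivity : (2*c : ℝ) ≠ 0)]
        module
    · intro hx
      rw [segment_eq_image'] at hx
      obtain ⟨θ, hθ, rfl⟩ := hx
      have hxM : M + (-c) • D + θ • (2*c) • D = M + ((2*θ - 1) * c) • D := by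
        rw [smul_smul]; module
      beta_reduce
      rw [hQP, hP, hxM]
      set s : ℝ := (2*θ - 1) * c with hs
      have hsabs : s^2 ≤ c^2 := by
        have h1 : (2*θ - 1)^2 ≤ 1 := by nlinarith [hθ.1, hθ.2]
        calc s^2 = (2*θ-1)^2 * c^2 := by rw [hs]; ring
        _ ≤ 1 * c^2 := by nlinarith [sq_nonneg c]
        _ = c^2 := one_mul _
      constructor
      · rw [segment_eq_image']
        refine ⟨1/2 + s, ⟨?_, ?_⟩, ?_⟩
        · have : -c ≤ s := by nlinarith [sq_nonneg (s + c)]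
          linarith
        · have : s ≤ c := by nlinarith [sq_nonneg (s - c)]
          linarith
        · rw [← hD, hM2]; module
      · rw [mem_closedBall_zero_iff]
        have h1 : ‖M + s • D‖^2 ≤ r_c^2 := by
          rw [hnorm s]
          have hc2 : c^2 * ‖D‖^2 = s0^2 := by rw [← mul_pow, hcD]
          nlinarith [sq_nonneg ‖D‖]
        have h2 := Real.sqrt_le_sqrt h1
        rwa [Real.sqrt_sq (norm_nonneg _), Real.sqrt_sq hrc.le] at h2
  rw [hseg, hausdorffMeasure_segment, edist_dist]
  congr 1
  rw [dist_eq_norm]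
  have : P - Q = (-(2*c)) • D := by rw [hP, hQ]; module
  rw [this, norm_smul]
  simp only [norm_neg, Real.norm_eq_abs, abs_of_pos (by linarith : (0:ℝ) < 2*c)]
  rw [mul_assoc, hcD]
end

section
/- Let A and B be points of the Euclidean plane with ‖A‖ = ‖B‖ = r_e, let M = (A+B)/2, and let 0 < r_c ≤ r_e. Then the segment[A,B] intersects the open ball of radius r_c centered at the origin if and only if ‖M‖ < r_c. -/
open Metric

/-- A chord with endpoints `A`, `B` on the circle of radius `r_e` enters the open
coverage ball of radius `r_c` (with `0 < r_c ≤ r_e`) iff its midpoint `M = (A+B)/2`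
satisfies `‖M‖ < r_c`. -/
theorem segment_inter_ball_iff (r_e r_c : ℝ) (hre : 0 < r_e) (hrc : 0 < r_c)
    (hce : r_c ≤ r_e)
    (A B : EuclideanSpace ℝ (Fin 2)) (hA : ‖A‖ = r_e) (hB : ‖B‖ = r_e)
    (M : EuclideanSpace ℝ (Fin 2)) (hM : M = midpoint ℝ A B) :
    (segment ℝ A B ∩ ball (0 : EuclideanSpace ℝ (Fin 2)) r_c).Nonempty ↔ ‖M‖ < r_c := by
  subst hM
  constructor
  · rintro ⟨x, hx, hxb⟩
    rw [mem_ball, dist_zero_right] at hxb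
    refine lt_of_le_of_lt ?_ hxb
    obtain ⟨a, b, ha, hb, hab, rfl⟩ := hx
    have hs : (inner ℝ A B : ℝ) ≤ r_e ^ 2 := by
      have := real_inner_le_norm A B
      rw [hA, hB] at this
      nlinarith
    have hMsq : ‖midpoint ℝ A B‖ ^ 2 = (r_e ^ 2 + (inner ℝ A B : ℝ)) / 2 := by
      rw [midpoint_eq_smul_add, norm_smul, mul_pow, norm_add_sq_real, hA, hB]
      norm_num
      ring
    have hxsq : ‖a • A + b • B‖ ^ 2
        = a ^ 2 * r_e ^ 2 + 2 * a * b * (inner ℝ A B : ℝ) + b ^ 2 * r_e ^ 2 := by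
      rw [norm_add_sq_real, norm_smul, norm_smul, real_inner_smul_left,
        real_inner_smul_right, hA, hB, Real.norm_eq_abs, Real.norm_eq_abs,
        abs_of_nonneg ha, abs_of_nonneg hb]
      ring
    have hb' : b = 1 - a := by linarith
    subst hb'
    have hsq : ‖midpoint ℝ A B‖ ^ 2 ≤ ‖a • A + (1 - a) • B‖ ^ 2 := by
      rw [hMsq, hxsq]
      nlinarith [mul_nonneg (sq_nonneg (2 * a - 1)) (sub_nonneg.mpr hs)]
    exact (pow_le_pow_iff_left₀ (norm_nonneg _) (norm_nonneg _) two_ne_zero).mp hsq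
  · intro h
    exact ⟨midpoint ℝ A B, midpoint_mem_segment A B,
      by rwa [mem_ball, dist_zero_right]⟩
end

section
/- Let r_e > 0, 0 < r_c < r_e, and ρ = r_c/r_e. For β ∈ (0, 2π) put A = (r_e, 0), B(β) = (r_e·cos β, r_e·sin β), and let P_UDE(β) denote the coverage proportion: the 1-dimensional Hausdorff measure of segment[A, B(β)] ∩ closedBall(0, r_c) divided by dist(A, B(β)). Then (1/(2π)) ∫₀^{2π} P_UDE(β) dβ = (1/(2π)) ∫_{π − 2·arcsin(ρ)}^{π + 2·arcsin(ρ)} √((r_c² − r_e²·γ(b)) / (r_e² − r_e²·γ(b))) db, where γ(b) = (1 + cos b)/2. (Proposition 2 of the paper: expected coverage proportion under uniformly distributed endpoints.) -/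
open Real MeasureTheory Metric Set

private lemma euclid_norm_sq (x : EuclideanSpace ℝ (Fin 2)) : ‖x‖^2 = (x 0)^2 + (x 1)^2 := by
  rw [EuclideanSpace.norm_eq, Real.sq_sqrt (by positivity)]
  simp [Fin.sum_univ_two]

private lemma seg_img (A D : EuclideanSpace ℝ (Fin 2)) {u v : ℝ} (h : u ≤ v) :
    segment ℝ (A + u • D) (A + v • D) = (fun t => A + t • D) '' Set.Icc u v := by
  rw [← segment_eq_Icc h, segment_eq_image, segment_eq_image ℝ u v, Set.image_image]
  apply Set.image_congr'
  intro θ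
  simp only [smul_add, smul_smul, smul_eq_mul]
  module

set_option maxHeartbeats 2000000 in
/-- **Proposition 2 (expected coverage proportion, uniformly distributed endpoints).**
With one endpoint fixed at `A = (r_e, 0)` and the other at `B(β) = (r_e cos β, r_e sin β)`,
the average over `β` uniform on `[0, 2π]` of the coverage proportion `P_UDE(β)` equals
`(1/(2π)) ∫_{π−2 arcsin ρ}^{π+2 arcsin ρ} √((r_c² − r_e² γ(b))/(r_e² − r_e² γ(b))) db`,
where `γ(b) = (1+cos b)/2` and `ρ = r_c/r_e`. -/
theorem expected_coverage_UDE (r_e r_c ρ : ℝ) (hre : 0 < r_e) (hrc : 0 < r_c)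
    (hce : r_c < r_e) (hρ : ρ = r_c / r_e)
    (A : EuclideanSpace ℝ (Fin 2))
    (hA : A = (EuclideanSpace.equiv (Fin 2) ℝ).symm ![r_e, 0])
    (B : ℝ → EuclideanSpace ℝ (Fin 2))
    (hB : ∀ β, B β = (EuclideanSpace.equiv (Fin 2) ℝ).symm ![r_e * cos β, r_e * sin β])
    (P_UDE : ℝ → ℝ)
    (hP : ∀ β ∈ Set.Ioo (0 : ℝ) (2 * π),
      P_UDE β = (μH[1] (segment ℝ A (B β) ∩
          closedBall (0 : EuclideanSpace ℝ (Fin 2)) r_c)).toReal / dist A (B β))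
    (γ : ℝ → ℝ) (hγ : ∀ b, γ b = (1 + cos b) / 2) :
    (1 / (2 * π)) * ∫ β in (0 : ℝ)..(2 * π), P_UDE β =
      (1 / (2 * π)) * ∫ b in (π - 2 * arcsin ρ)..(π + 2 * arcsin ρ),
        Real.sqrt ((r_c ^ 2 - r_e ^ 2 * γ b) / (r_e ^ 2 - r_e ^ 2 * γ b)) := by
  have hπ : 0 < π := Real.pi_pos
  have hρ0 : 0 < ρ := hρ ▸ div_pos hrc hre
  have hρ1 : ρ < 1 := by rw [hρ]; exact (div_lt_one hre).mpr hce
  have hα0 : 0 < arcsin ρ := Real.arcsin_pos.mpr hρ0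
  have hα2 : arcsin ρ < π/2 := by
    have := Real.arcsin_lt_pi_div_two (x := ρ)
    rw [this]; exact hρ1
  have hsinα : sin (arcsin ρ) = ρ := Real.sin_arcsin (by linarith) (by linarith)
  obtain ⟨a, ha_def⟩ : ∃ a : ℝ, a = π - 2 * arcsin ρ := ⟨_, rfl⟩
  obtain ⟨b, hb_def⟩ : ∃ b : ℝ, b = π + 2 * arcsin ρ := ⟨_, rfl⟩
  have ha0 : 0 < a := by rw [ha_def]; linarith
  have haπ : a ≤ π := by rw [ha_def]; linarith
  have hπb : π ≤ b := by rw [hb_def]; linarith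
  have hb2π : b < 2*π := by rw [hb_def]; linarith
  have hcos_a : cos a = 2*ρ^2 - 1 := by
    rw [ha_def, Real.cos_pi_sub, Real.cos_two_mul, Real.cos_arcsin,
      Real.sq_sqrt (by nlinarith)]
    ring
  have hρrc : r_e^2 * ρ^2 = r_c^2 := by
    rw [hρ]; field_simp
  obtain ⟨F, hF⟩ : ∃ F : ℝ → ℝ, F = fun x =>
      Real.sqrt ((r_c ^ 2 - r_e ^ 2 * γ x) / (r_e ^ 2 - r_e ^ 2 * γ x)) := ⟨_, rfl⟩
  -- the key pointwise identity
  have key : ∀ β ∈ Set.Ioo (0:ℝ) (2*π), P_UDE β = F β := by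
    intro β hβ
    obtain ⟨hβ0, hβ2⟩ := hβ
    obtain ⟨c, hc⟩ : ∃ c : ℝ, c = cos (β/2) := ⟨_, rfl⟩
    obtain ⟨s, hs_def⟩ : ∃ s : ℝ, s = sin (β/2) := ⟨_, rfl⟩
    have hs : 0 < s := by
      rw [hs_def]
      exact Real.sin_pos_of_pos_of_lt_pi (by linarith) (by linarith)
    have hpy : s^2 + c^2 = 1 := by rw [hs_def, hc]; exact Real.sin_sq_add_cos_sq _
    have hcosβ : cos β = 2*c^2 - 1 := by
      have h2 := Real.cos_two_mul (β/2)
      rw [show 2*(β/2) = β by ring] at h2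
      rw [h2, hc]
    have hsinβ : sin β = 2*s*c := by
      have h2 := Real.sin_two_mul (β/2)
      rw [show 2*(β/2) = β by ring] at h2
      rw [h2, hc, hs_def]
    have hγβ : γ β = c^2 := by rw [hγ, hcosβ]; ring
    have hden : r_e^2 - r_e^2 * γ β = r_e^2 * s^2 := by
      rw [hγβ]; linear_combination (-r_e^2) * hpy
    obtain ⟨D, hD⟩ : ∃ D : EuclideanSpace ℝ (Fin 2), D = B β - A := ⟨_, rfl⟩
    obtain ⟨p, hp⟩ : ∃ p : ℝ → EuclideanSpace ℝ (Fin 2),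
      p = fun t => A + t • D := ⟨_, rfl⟩
    have hseg : segment ℝ A (B β) = p '' Set.Icc (0:ℝ) 1 := by
      have h1 : A + (0:ℝ) • D = A := by module
      have h2 : A + (1:ℝ) • D = B β := by rw [hD]; module
      conv_lhs => rw [← h1, ← h2]
      rw [hp]
      exact seg_img A D zero_le_one
    have hp0 : ∀ t : ℝ, p t 0 = r_e + t*(r_e*cos β - r_e) := by
      intro t
      simp [hp, hD, hA, hB β]
    have hp1 : ∀ t : ℝ, p t 1 = t*(r_e*sin β) := by
      intro t
      simp [hp, hD, hA, hB β]
    have hnormsq : ∀ t : ℝ, ‖p t‖^2 = r_e^2*c^2 + 4*r_e^2*s^2*(t - 1/2)^2 := by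
      intro t
      rw [euclid_norm_sq, hp0 t, hp1 t, hcosβ, hsinβ]
      linear_combination (r_e^2*(4*t^2*c^2 - 4*t^2 + 4*t - 1)) * hpy
    have hdist : dist A (B β) = 2*r_e*s := by
      have h0 : (A - B β) 0 = r_e - r_e * cos β := by simp [hA, hB β]
      have h1 : (A - B β) 1 = -(r_e * sin β) := by simp [hA, hB β]
      have h2 : dist A (B β)^2 = (2*r_e*s)^2 := by
        rw [dist_eq_norm, euclid_norm_sq, h0, h1, hcosβ, hsinβ]
        linear_combination (4*r_e^2*(c^2-1)) * hpy
      have h3 : (0:ℝ) ≤ 2*r_e*s := by positivity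
      calc dist A (B β) = Real.sqrt (dist A (B β)^2) := (Real.sqrt_sq dist_nonneg).symm
        _ = Real.sqrt ((2*r_e*s)^2) := by rw [h2]
        _ = 2*r_e*s := Real.sqrt_sq h3
    rcases le_or_gt (r_e^2*c^2) (r_c^2) with hcase | hcase
    · -- nonempty intersection
      have hnum0 : 0 ≤ r_c^2 - r_e^2*c^2 := by linarith
      obtain ⟨K, hK⟩ : ∃ K : ℝ,
        K = Real.sqrt (r_c^2 - r_e^2*c^2) / (2*(r_e*s)) := ⟨_, rfl⟩
      have hK0 : 0 ≤ K := by rw [hK]; positivity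
      have hKhalf : K < 1/2 := by
        rw [hK, div_lt_iff₀ (by positivity)]
        have hlt : Real.sqrt (r_c^2 - r_e^2*c^2) < r_e*s := by
          rw [show r_e*s = Real.sqrt ((r_e*s)^2) from (Real.sqrt_sq (by positivity)).symm]
          apply Real.sqrt_lt_sqrt hnum0
          have he1 : (r_e*s)^2 = r_e^2 - r_e^2*c^2 := by linear_combination r_e^2 * hpy
          have he2 : r_c^2 < r_e^2 := by
            have := pow_lt_pow_left₀ hce hrc.le (n := 2) (by norm_num)
            exact this
          linarith
        linarith
      have hK2 : 4*r_e^2*s^2*K^2 = r_c^2 - r_e^2*c^2 := by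
        rw [hK, div_pow, Real.sq_sqrt hnum0]
        field_simp
        ring
      obtain ⟨t₁, ht₁⟩ : ∃ t : ℝ, t = 1/2 - K := ⟨_, rfl⟩
      obtain ⟨t₂, ht₂⟩ : ∃ t : ℝ, t = 1/2 + K := ⟨_, rfl⟩
      have ht12 : t₁ ≤ t₂ := by rw [ht₁, ht₂]; linarith
      have hsub : Set.Icc t₁ t₂ ⊆ Set.Icc (0:ℝ) 1 :=
        Set.Icc_subset_Icc (by rw [ht₁]; linarith) (by rw [ht₂]; linarith)
      have hseg2 : segment ℝ (p t₁) (p t₂) = p '' Set.Icc t₁ t₂ := by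
        rw [hp]; exact seg_img A D ht12
      have hsegint : segment ℝ A (B β) ∩ closedBall 0 r_c = segment ℝ (p t₁) (p t₂) := by
        rw [hseg, hseg2]
        ext x
        constructor
        · rintro ⟨⟨t, ht, rfl⟩, hxball⟩
          refine ⟨t, ?_, rfl⟩
          have hxn : ‖p t‖ ≤ r_c := mem_closedBall_zero_iff.mp hxball
          have hsq : ‖p t‖^2 ≤ r_c^2 := pow_le_pow_left₀ (norm_nonneg _) hxn 2
          rw [hnormsq t] at hsq
          have hpos : (0:ℝ) < 4*r_e^2*s^2 := by positivity
          have h1 : (t - 1/2)^2 ≤ K^2 := by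
            have hmul : 4*r_e^2*s^2*(t - 1/2)^2 ≤ 4*r_e^2*s^2*K^2 := by linarith
            exact le_of_mul_le_mul_left hmul hpos
          have h2 : |t - 1/2| ≤ K := by
            calc |t - 1/2| = Real.sqrt ((t-1/2)^2) := (Real.sqrt_sq_eq_abs _).symm
              _ ≤ Real.sqrt (K^2) := Real.sqrt_le_sqrt h1
              _ = K := Real.sqrt_sq hK0
          rw [abs_le] at h2
          exact ⟨by rw [ht₁]; linarith [h2.1], by rw [ht₂]; linarith [h2.2]⟩
        · rintro ⟨t, ht, rfl⟩
          refine ⟨⟨t, hsub ht, rfl⟩, ?_⟩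
          rw [mem_closedBall_zero_iff]
          have h1 : (t - 1/2)^2 ≤ K^2 := by
            apply sq_le_sq'
            · have := ht.1; rw [ht₁] at this; linarith
            · have := ht.2; rw [ht₂] at this; linarith
          have hsq : ‖p t‖^2 ≤ r_c^2 := by
            rw [hnormsq t]
            have hmul := mul_le_mul_of_nonneg_left h1
              (show (0:ℝ) ≤ 4*r_e^2*s^2 by positivity)
            linarith
          calc ‖p t‖ = Real.sqrt (‖p t‖^2) := (Real.sqrt_sq (norm_nonneg _)).symm
            _ ≤ Real.sqrt (r_c^2) := Real.sqrt_le_sqrt hsq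
            _ = r_c := Real.sqrt_sq hrc.le
      have hdiff : p t₁ - p t₂ = (-(2*K)) • D := by
        simp only [hp]
        rw [ht₁, ht₂]
        module
      have hDnorm : ‖D‖ = 2*r_e*s := by
        rw [hD, ← hdist, dist_eq_norm, norm_sub_rev]
      have hdistp : dist (p t₁) (p t₂) = 2*K*(2*r_e*s) := by
        rw [dist_eq_norm, hdiff, norm_smul, hDnorm, Real.norm_eq_abs, abs_neg,
          abs_of_nonneg (by positivity : (0:ℝ) ≤ 2*K)]
      rw [hP β ⟨hβ0, hβ2⟩, hsegint, hausdorffMeasure_segment, edist_dist,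
        ENNReal.toReal_ofReal dist_nonneg, hdistp, hdist, hF]
      simp only []
      rw [hden, hγβ]
      rw [Real.sqrt_div hnum0, show r_e^2*s^2 = (r_e*s)^2 by ring,
        Real.sqrt_sq (by positivity)]
      rw [hK]
      field_simp
    · -- empty intersection
      have hempty : segment ℝ A (B β) ∩ closedBall 0 r_c
          = (∅ : Set (EuclideanSpace ℝ (Fin 2))) := by
        ext x
        simp only [Set.mem_inter_iff, Set.mem_empty_iff_false, iff_false, not_and]
        intro hxseg hxball
        rw [hseg] at hxseg
        obtain ⟨t, ht, rfl⟩ := hxseg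
        have h1 : ‖p t‖ ≤ r_c := mem_closedBall_zero_iff.mp hxball
        have h2 : ‖p t‖^2 ≤ r_c^2 := pow_le_pow_left₀ (norm_nonneg _) h1 2
        rw [hnormsq t] at h2
        have h3 : (0:ℝ) ≤ 4*r_e^2*s^2*(t - 1/2)^2 := by positivity
        linarith
      rw [hP β ⟨hβ0, hβ2⟩, hempty, measure_empty]
      simp only [ENNReal.toReal_zero, zero_div]
      symm
      rw [hF]
      apply Real.sqrt_eq_zero'.mpr
      apply div_nonpos_of_nonpos_of_nonneg
      · rw [hγβ]; linarith
      · rw [hden]; positivity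
  -- replace P_UDE by F in the integral
  have hae : ∀ᵐ (x : ℝ) ∂volume, x ≠ 2*π := by
    refine MeasureTheory.ae_iff.mpr ?_
    have hss : {x : ℝ | ¬ x ≠ 2*π} = {2*π} := by ext x; simp
    rw [hss]
    exact measure_singleton _
  have hFeq : ∫ β in (0:ℝ)..(2*π), P_UDE β = ∫ β in (0:ℝ)..(2*π), F β := by
    apply intervalIntegral.integral_congr_ae
    filter_upwards [hae] with x hx hmem
    rw [Set.uIoc_of_le (by positivity : (0:ℝ) ≤ 2*π)] at hmem
    exact key x ⟨hmem.1, lt_of_le_of_ne hmem.2 hx⟩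
  -- F vanishes outside [a, b]
  have hcos_ge : ∀ x : ℝ, cos a ≤ cos x → F x = 0 := by
    intro x hcx
    rw [hF]
    apply Real.sqrt_eq_zero'.mpr
    apply div_nonpos_of_nonpos_of_nonneg
    · rw [hγ]
      rw [hcos_a] at hcx
      have hmul := mul_le_mul_of_nonneg_left hcx (sq_nonneg r_e)
      linarith
    · rw [hγ]
      have hmul := mul_le_mul_of_nonneg_left (Real.cos_le_one x) (sq_nonneg r_e)
      linarith
  have hF0a : ∀ x ∈ Set.uIcc (0:ℝ) a, F x = 0 := by
    intro x hx
    rw [Set.uIcc_of_le ha0.le] at hx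
    exact hcos_ge x (Real.cos_le_cos_of_nonneg_of_le_pi hx.1 haπ hx.2)
  have hF0b : ∀ x ∈ Set.uIcc b (2*π), F x = 0 := by
    intro x hx
    rw [Set.uIcc_of_le hb2π.le] at hx
    apply hcos_ge
    have h1 : cos x = cos (2*π - x) := (Real.cos_two_pi_sub x).symm
    rw [h1]
    apply Real.cos_le_cos_of_nonneg_of_le_pi (by linarith [hx.2]) haπ
    rw [ha_def]
    rw [hb_def] at hx
    linarith [hx.1]
  -- integrability
  have hcos_lt_one : ∀ x ∈ Set.uIcc a b, cos x < 1 := by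
    intro x hx
    rw [Set.uIcc_of_le (by linarith : a ≤ b)] at hx
    rcases lt_or_eq_of_le (Real.cos_le_one x) with h | h
    · exact h
    · exfalso
      have hx0 : x ≠ 0 := by
        intro h0
        rw [h0] at hx
        linarith [hx.1]
      exact hx0 ((Real.cos_eq_one_iff_of_lt_of_lt (x := x)
        (by linarith [hx.1]) (by linarith [hx.2])).mp h)
  have hγfun : γ = fun x => (1 + cos x)/2 := funext hγ
  have I2 : IntervalIntegrable F volume a b := by
    apply ContinuousOn.intervalIntegrable
    rw [hF, hγfun]
    apply ContinuousOn.sqrt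
    apply ContinuousOn.div
    · fun_prop
    · fun_prop
    · intro x hx
      have hlt := hcos_lt_one x hx
      have hmul := mul_lt_mul_of_pos_left hlt (show (0:ℝ) < r_e^2 by positivity)
      have : (0:ℝ) < r_e ^ 2 - r_e ^ 2 * ((1 + cos x) / 2) := by linarith
      exact ne_of_gt this
  have I1 : IntervalIntegrable F volume 0 a := by
    rw [intervalIntegrable_iff_integrableOn_Ioc_of_le ha0.le]
    have hz : IntegrableOn (fun _ : ℝ => (0:ℝ)) (Set.Ioc (0:ℝ) a) volume :=
      integrableOn_zero
    exact hz.congr_fun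
      (fun x hx => (hF0a x (by
        rw [Set.uIcc_of_le ha0.le]; exact Set.Ioc_subset_Icc_self hx)).symm)
      measurableSet_Ioc
  have I3 : IntervalIntegrable F volume b (2*π) := by
    rw [intervalIntegrable_iff_integrableOn_Ioc_of_le hb2π.le]
    have hz : IntegrableOn (fun _ : ℝ => (0:ℝ)) (Set.Ioc b (2*π)) volume :=
      integrableOn_zero
    exact hz.congr_fun
      (fun x hx => (hF0b x (by
        rw [Set.uIcc_of_le hb2π.le]; exact Set.Ioc_subset_Icc_self hx)).symm)
      measurableSet_Ioc
  have hIa : ∫ x in (0:ℝ)..a, F x = 0 := by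
    rw [intervalIntegral.integral_congr hF0a]
    simp
  have hIb : ∫ x in b..(2*π), F x = 0 := by
    rw [intervalIntegral.integral_congr hF0b]
    simp
  have hsplit : ∫ x in (0:ℝ)..(2*π), F x = ∫ x in a..b, F x := by
    have h2 := intervalIntegral.integral_add_adjacent_intervals I2 I3
    have h1 := intervalIntegral.integral_add_adjacent_intervals I1 (I2.trans I3)
    rw [← h1, ← h2, hIa, hIb]
    ring
  rw [hFeq, hsplit, ha_def, hb_def, hF]
end

section
/- For r_e = 1 and r_c = 1/2, the expected coverage proportion under uniformly distributed endpoints strictly exceeds that under uniformly distributed midpoints: (1/(2π)) ∫_{2π/3}^{4π/3} √((1/4 − (1+cos b)/2)/(1 − (1+cos b)/2)) db > ∫₀^{1/2} 2l·√((1/4 − l²)/(1 − l²)) dl. -/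
set_option maxHeartbeats 1000000

open Real

noncomputable def fE (b : ℝ) : ℝ :=
  Real.sqrt ((1 / 4 - (1 + Real.cos b) / 2) / (1 - (1 + Real.cos b) / 2))

lemma cos_le_left {a x : ℝ} (ha : 0 ≤ a) (hx : a ≤ x) (hx2 : x ≤ π) :
    Real.cos x ≤ Real.cos a :=
  Real.cos_le_cos_of_nonneg_of_le_pi ha hx2 hx

lemma cos_le_right {b x : ℝ} (hb : b ≤ 2 * π) (hx : x ≤ b) (hx2 : π ≤ x) :
    Real.cos x ≤ Real.cos b := by
  rw [← Real.cos_two_pi_sub x, ← Real.cos_two_pi_sub b]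
  exact Real.cos_le_cos_of_nonneg_of_le_pi (by linarith) (by linarith) (by linarith)

lemma cos_le_half {x : ℝ} (h1 : 8 * π / 12 ≤ x) (h2 : x ≤ 16 * π / 12) :
    Real.cos x ≤ -(1 / 2) := by
  have hπ := Real.pi_pos
  rcases le_or_gt x π with h | h
  · have := cos_le_left (a := 8 * π / 12) (by linarith) h1 h
    have he : Real.cos (8 * π / 12) = -(1/2) := by
      have h8 : (8 : ℝ) * π / 12 = π - π / 3 := by ring
      rw [h8, Real.cos_pi_sub, Real.cos_pi_div_three]
    linarith
  · have := cos_le_right (b := 16 * π / 12) (x := x) (by linarith) h2 h.le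
    have he : Real.cos (16 * π / 12) = -(1/2) := by
      have h16 : (16 : ℝ) * π / 12 = 2 * π - (π - π / 3) := by ring
      rw [h16, Real.cos_two_pi_sub, Real.cos_pi_sub, Real.cos_pi_div_three]
    linarith

lemma fE_integrable {a b : ℝ} (ha : 8 * π / 12 ≤ a) (hab : a ≤ b) (hb : b ≤ 16 * π / 12) :
    IntervalIntegrable fE MeasureTheory.volume a b := by
  apply ContinuousOn.intervalIntegrable
  apply ContinuousOn.sqrt
  apply ContinuousOn.div
  · fun_prop
  · fun_prop
  · intro x hx
    rw [Set.uIcc_of_le hab] at hx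
    have hch := cos_le_half (x := x) (by linarith [hx.1]) (by linarith [hx.2])
    intro hzero
    have hc1 : Real.cos x = 1 := by linarith
    linarith

lemma fE_nonneg (b : ℝ) : 0 ≤ fE b := Real.sqrt_nonneg _

lemma fE_ge {q c b : ℝ} (hq : 0 ≤ q) (hq1 : q ≤ 1) (hcc : c ≤ -(1/2))
    (hb : Real.cos b ≤ c) (hc : q ^ 2 * ((1 - c) / 2) ≤ -(1/4) - c / 2) :
    q ≤ fE b := by
  set x := Real.cos b with hxdef
  have hD : (0 : ℝ) < 1 - (1 + x) / 2 := by
    have : x ≤ -(1/2) := le_trans hb hcc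
    linarith
  have h1 : 0 ≤ (c - x) * (1 - q ^ 2) :=
    mul_nonneg (by linarith) (by nlinarith)
  have key : q ^ 2 ≤ (1 / 4 - (1 + x) / 2) / (1 - (1 + x) / 2) := by
    rw [le_div_iff₀ hD]
    nlinarith [h1, hc]
  calc q = Real.sqrt (q ^ 2) := (Real.sqrt_sq hq).symm
    _ ≤ fE b := Real.sqrt_le_sqrt key

lemma piece_lb {a b q : ℝ} (hab : a ≤ b) (ha : 8 * π / 12 ≤ a) (hb : b ≤ 16 * π / 12)
    (h : ∀ x ∈ Set.Icc a b, q ≤ fE x) :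
    q * (b - a) ≤ ∫ x in a..b, fE x := by
  have h2 := intervalIntegral.integral_mono_on hab intervalIntegrable_const
    (fE_integrable ha hab hb) h
  simpa [intervalIntegral.integral_const, mul_comm] using h2

lemma sqrt2_ge : (141421 : ℝ) / 100000 ≤ Real.sqrt 2 :=
  (Real.le_sqrt (by norm_num) (by norm_num)).mpr (by norm_num)

lemma sqrt3_ge : (173205 : ℝ) / 100000 ≤ Real.sqrt 3 :=
  (Real.le_sqrt (by norm_num) (by norm_num)).mpr (by norm_num)

-- cos (11π/12) ≤ -9659/10000
lemma cos_11_bound : Real.cos (11 * π / 12) ≤ -(9659 / 10000) := by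
  have h11 : (11 : ℝ) * π / 12 = π - π / 12 := by ring
  have h12 : (π : ℝ) / 12 = π / 3 - π / 4 := by ring
  have hv : Real.cos (π / 12) = 1 / 2 * (Real.sqrt 2 / 2) +
      Real.sqrt 3 / 2 * (Real.sqrt 2 / 2) := by
    rw [h12, Real.cos_sub, Real.cos_pi_div_three, Real.cos_pi_div_four,
      Real.sin_pi_div_three, Real.sin_pi_div_four]
  have h2 := sqrt2_ge
  have h3 := sqrt3_ge
  have hlb : (9659 : ℝ) / 10000 ≤ Real.cos (π / 12) := by
    rw [hv]
    nlinarith [Real.sqrt_nonneg 2, Real.sqrt_nonneg 3]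
  rw [h11, Real.cos_pi_sub]
  linarith

lemma cos_34_bound : Real.cos (9 * π / 12) ≤ -(707 / 1000) := by
  have h9 : (9 : ℝ) * π / 12 = π - π / 4 := by ring
  rw [h9, Real.cos_pi_sub, Real.cos_pi_div_four]
  have := sqrt2_ge
  linarith

lemma cos_56_bound : Real.cos (10 * π / 12) ≤ -(866 / 1000) := by
  have h10 : (10 : ℝ) * π / 12 = π - π / 6 := by ring
  rw [h10, Real.cos_pi_sub, Real.cos_pi_div_six]
  have := sqrt3_ge
  linarith

lemma cos_13_bound : Real.cos (13 * π / 12) ≤ -(9659 / 10000) := by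
  have h13 : (13 : ℝ) * π / 12 = 2 * π - 11 * π / 12 := by ring
  rw [h13, Real.cos_two_pi_sub]
  exact cos_11_bound

lemma cos_76_bound : Real.cos (14 * π / 12) ≤ -(866 / 1000) := by
  have h14 : (14 : ℝ) * π / 12 = 2 * π - 10 * π / 12 := by ring
  rw [h14, Real.cos_two_pi_sub]
  exact cos_56_bound

lemma cos_54_bound : Real.cos (15 * π / 12) ≤ -(707 / 1000) := by
  have h15 : (15 : ℝ) * π / 12 = 2 * π - 9 * π / 12 := by ring
  rw [h15, Real.cos_two_pi_sub]
  exact cos_34_bound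

/-- Lower bound for the UDE integral. -/
lemma lhs_integral_ge :
    (2555 / 1000 : ℝ) * (π / 12) ≤ ∫ x in (8 * π / 12)..(16 * π / 12), fE x := by
  have hπ := Real.pi_pos
  have hii : ∀ i j : ℝ, 8 ≤ i → i ≤ j → j ≤ 16 →
      IntervalIntegrable fE MeasureTheory.volume (i * π / 12) (j * π / 12) := by
    intro i j hi hj hj2
    apply fE_integrable
    · nlinarith
    · nlinarith
    · nlinarith
  -- split into 8 adjacent pieces
  have hsplit : (∫ x in (8 * π / 12)..(16 * π / 12), fE x) =
      (∫ x in (8 * π / 12)..(9 * π / 12), fE x) + ((∫ x in (9 * π / 12)..(10 * π / 12), fE x) +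
      ((∫ x in (10 * π / 12)..(11 * π / 12), fE x) + ((∫ x in (11 * π / 12)..(12 * π / 12), fE x) +
      ((∫ x in (12 * π / 12)..(13 * π / 12), fE x) + ((∫ x in (13 * π / 12)..(14 * π / 12), fE x) +
      ((∫ x in (14 * π / 12)..(15 * π / 12), fE x) + (∫ x in (15 * π / 12)..(16 * π / 12), fE x))))))) := by
    rw [intervalIntegral.integral_add_adjacent_intervals (hii 14 15 (by norm_num) (by norm_num) (by norm_num)) (hii 15 16 (by norm_num) (by norm_num) (by norm_num))]
    rw [intervalIntegral.integral_add_adjacent_intervals (hii 13 14 (by norm_num) (by norm_num) (by norm_num)) (hii 14 16 (by norm_num) (by norm_num) (by norm_num))]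
    rw [intervalIntegral.integral_add_adjacent_intervals (hii 12 13 (by norm_num) (by norm_num) (by norm_num)) (hii 13 16 (by norm_num) (by norm_num) (by norm_num))]
    rw [intervalIntegral.integral_add_adjacent_intervals (hii 11 12 (by norm_num) (by norm_num) (by norm_num)) (hii 12 16 (by norm_num) (by norm_num) (by norm_num))]
    rw [intervalIntegral.integral_add_adjacent_intervals (hii 10 11 (by norm_num) (by norm_num) (by norm_num)) (hii 11 16 (by norm_num) (by norm_num) (by norm_num))]
    rw [intervalIntegral.integral_add_adjacent_intervals (hii 9 10 (by norm_num) (by norm_num) (by norm_num)) (hii 10 16 (by norm_num) (by norm_num) (by norm_num))]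
    rw [intervalIntegral.integral_add_adjacent_intervals (hii 8 9 (by norm_num) (by norm_num) (by norm_num)) (hii 9 16 (by norm_num) (by norm_num) (by norm_num))]
  -- per-piece lower bounds
  have p8 : (0 : ℝ) ≤ ∫ x in (8 * π / 12)..(9 * π / 12), fE x := by
    have := piece_lb (q := 0) (a := 8 * π / 12) (b := 9 * π / 12)
      (by nlinarith) (by nlinarith) (by nlinarith)
      (fun x _ => fE_nonneg x)
    linarith
  have p15 : (0 : ℝ) ≤ ∫ x in (15 * π / 12)..(16 * π / 12), fE x := by
    have := piece_lb (q := 0) (a := 15 * π / 12) (b := 16 * π / 12)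
      (by nlinarith) (by nlinarith) (by nlinarith)
      (fun x _ => fE_nonneg x)
    linarith
  have p9 : (348 / 1000 : ℝ) * (π / 12) ≤ ∫ x in (9 * π / 12)..(10 * π / 12), fE x := by
    have h := piece_lb (q := 348 / 1000) (a := 9 * π / 12) (b := 10 * π / 12)
      (by nlinarith) (by nlinarith) (by nlinarith) ?_
    · calc (348 / 1000 : ℝ) * (π / 12) = 348 / 1000 * (10 * π / 12 - 9 * π / 12) := by ring
        _ ≤ _ := h
    intro x hx
    apply fE_ge (c := -(707 / 1000)) (by norm_num) (by norm_num) (by norm_num)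
    · calc Real.cos x ≤ Real.cos (9 * π / 12) :=
            cos_le_left (by nlinarith) hx.1 (by nlinarith [hx.2])
        _ ≤ -(707 / 1000) := cos_34_bound
    · norm_num
  have p10 : (4428 / 10000 : ℝ) * (π / 12) ≤ ∫ x in (10 * π / 12)..(11 * π / 12), fE x := by
    have h := piece_lb (q := 4428 / 10000) (a := 10 * π / 12) (b := 11 * π / 12)
      (by nlinarith) (by nlinarith) (by nlinarith) ?_
    · calc (4428 / 10000 : ℝ) * (π / 12) = 4428 / 10000 * (11 * π / 12 - 10 * π / 12) := by ring
        _ ≤ _ := h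
    intro x hx
    apply fE_ge (c := -(866 / 1000)) (by norm_num) (by norm_num) (by norm_num)
    · calc Real.cos x ≤ Real.cos (10 * π / 12) :=
            cos_le_left (by nlinarith) hx.1 (by nlinarith [hx.2])
        _ ≤ -(866 / 1000) := cos_56_bound
    · norm_num
  have p11 : (4867 / 10000 : ℝ) * (π / 12) ≤ ∫ x in (11 * π / 12)..(12 * π / 12), fE x := by
    have h := piece_lb (q := 4867 / 10000) (a := 11 * π / 12) (b := 12 * π / 12)
      (by nlinarith) (by nlinarith) (by nlinarith) ?_
    · calc (4867 / 10000 : ℝ) * (π / 12) = 4867 / 10000 * (12 * π / 12 - 11 * π / 12) := by ring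
        _ ≤ _ := h
    intro x hx
    apply fE_ge (c := -(9659 / 10000)) (by norm_num) (by norm_num) (by norm_num)
    · calc Real.cos x ≤ Real.cos (11 * π / 12) :=
            cos_le_left (by nlinarith) hx.1 (by nlinarith [hx.2])
        _ ≤ -(9659 / 10000) := cos_11_bound
    · norm_num
  have p12 : (4867 / 10000 : ℝ) * (π / 12) ≤ ∫ x in (12 * π / 12)..(13 * π / 12), fE x := by
    have h := piece_lb (q := 4867 / 10000) (a := 12 * π / 12) (b := 13 * π / 12)
      (by nlinarith) (by nlinarith) (by nlinarith) ?_
    · calc (4867 / 10000 : ℝ) * (π / 12) = 4867 / 10000 * (13 * π / 12 - 12 * π / 12) := by ring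
        _ ≤ _ := h
    intro x hx
    apply fE_ge (c := -(9659 / 10000)) (by norm_num) (by norm_num) (by norm_num)
    · calc Real.cos x ≤ Real.cos (13 * π / 12) :=
            cos_le_right (by nlinarith) hx.2 (by nlinarith [hx.1])
        _ ≤ -(9659 / 10000) := cos_13_bound
    · norm_num
  have p13 : (4428 / 10000 : ℝ) * (π / 12) ≤ ∫ x in (13 * π / 12)..(14 * π / 12), fE x := by
    have h := piece_lb (q := 4428 / 10000) (a := 13 * π / 12) (b := 14 * π / 12)
      (by nlinarith) (by nlinarith) (by nlinarith) ?_
    · calc (4428 / 10000 : ℝ) * (π / 12) = 4428 / 10000 * (14 * π / 12 - 13 * π / 12) := by ring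
        _ ≤ _ := h
    intro x hx
    apply fE_ge (c := -(866 / 1000)) (by norm_num) (by norm_num) (by norm_num)
    · calc Real.cos x ≤ Real.cos (14 * π / 12) :=
            cos_le_right (by nlinarith) hx.2 (by nlinarith [hx.1])
        _ ≤ -(866 / 1000) := cos_76_bound
    · norm_num
  have p14 : (348 / 1000 : ℝ) * (π / 12) ≤ ∫ x in (14 * π / 12)..(15 * π / 12), fE x := by
    have h := piece_lb (q := 348 / 1000) (a := 14 * π / 12) (b := 15 * π / 12)
      (by nlinarith) (by nlinarith) (by nlinarith) ?_
    · calc (348 / 1000 : ℝ) * (π / 12) = 348 / 1000 * (15 * π / 12 - 14 * π / 12) := by ring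
        _ ≤ _ := h
    intro x hx
    apply fE_ge (c := -(707 / 1000)) (by norm_num) (by norm_num) (by norm_num)
    · calc Real.cos x ≤ Real.cos (15 * π / 12) :=
            cos_le_right (by nlinarith) hx.2 (by nlinarith [hx.1])
        _ ≤ -(707 / 1000) := cos_54_bound
    · norm_num
  rw [hsplit]
  nlinarith [p8, p9, p10, p11, p12, p13, p14, p15]

/-- Upper bound for the UDM integral. -/
lemma rhs_integral_le :
    (∫ l in (0 : ℝ)..(1 / 2), 2 * l * Real.sqrt ((1 / 4 - l ^ 2) / (1 - l ^ 2))) ≤ 301 / 3072 := by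
  have h1 : (∫ l in (0 : ℝ)..(1 / 2), 2 * l * Real.sqrt ((1 / 4 - l ^ 2) / (1 - l ^ 2)))
      ≤ ∫ l in (0 : ℝ)..(1 / 2), (l - l ^ 3 - 4 * l ^ 5 - 2 * l ^ 7) := by
    apply intervalIntegral.integral_mono_on (by norm_num : (0:ℝ) ≤ 1/2)
    · apply ContinuousOn.intervalIntegrable
      apply ContinuousOn.mul
      · fun_prop
      apply ContinuousOn.sqrt
      apply ContinuousOn.div
      · fun_prop
      · fun_prop
      · intro x hx
        rw [Set.uIcc_of_le (by norm_num : (0:ℝ) ≤ 1/2)] at hx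
        obtain ⟨hx0, hx1⟩ := hx
        nlinarith
    · apply Continuous.intervalIntegrable
      continuity
    · intro x hx
      obtain ⟨hx0, hx1⟩ := hx
      have hsq : x ^ 2 ≤ 1 / 4 := by nlinarith
      have h4 : x ^ 4 ≤ 1 / 16 := by nlinarith [sq_nonneg x]
      have h6 : x ^ 6 ≤ 1 / 64 := by nlinarith [sq_nonneg x, sq_nonneg (x ^ 2), h4]
      have hBnn : (0 : ℝ) ≤ (1 - x ^ 2 - 4 * x ^ 4 - 2 * x ^ 6) / 2 := by nlinarith
      have hden : (0 : ℝ) < 1 - x ^ 2 := by nlinarith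
      have harg : (1 / 4 - x ^ 2) / (1 - x ^ 2) ≤ ((1 - x ^ 2 - 4 * x ^ 4 - 2 * x ^ 6) / 2) ^ 2 := by
        rw [div_le_iff₀ hden]
        have ha : (1 : ℝ) - 4 * x ^ 2 ≤ (1 - 2 * x ^ 2 - 2 * x ^ 4) ^ 2 := by nlinarith [pow_nonneg hx0 6, pow_nonneg hx0 8]
        have hb : (1 : ℝ) ≤ (1 + x ^ 2) ^ 2 * (1 - x ^ 2) := by nlinarith
        have hc : (0 : ℝ) ≤ 1 - 4 * x ^ 2 := by nlinarith
        have key : (1 - 4 * x ^ 2) * 1 ≤ (1 - 2 * x ^ 2 - 2 * x ^ 4) ^ 2 * ((1 + x ^ 2) ^ 2 * (1 - x ^ 2)) :=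
          mul_le_mul ha hb (by norm_num) (sq_nonneg _)
        nlinarith [key]
      have hB : Real.sqrt ((1 / 4 - x ^ 2) / (1 - x ^ 2)) ≤ (1 - x ^ 2 - 4 * x ^ 4 - 2 * x ^ 6) / 2 := by
        calc Real.sqrt ((1 / 4 - x ^ 2) / (1 - x ^ 2))
            ≤ Real.sqrt (((1 - x ^ 2 - 4 * x ^ 4 - 2 * x ^ 6) / 2) ^ 2) := Real.sqrt_le_sqrt harg
          _ = (1 - x ^ 2 - 4 * x ^ 4 - 2 * x ^ 6) / 2 := Real.sqrt_sq hBnn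
      calc 2 * x * Real.sqrt ((1 / 4 - x ^ 2) / (1 - x ^ 2))
          ≤ 2 * x * ((1 - x ^ 2 - 4 * x ^ 4 - 2 * x ^ 6) / 2) :=
            mul_le_mul_of_nonneg_left hB (by linarith)
        _ = x - x ^ 3 - 4 * x ^ 5 - 2 * x ^ 7 := by ring
  have h2 : (∫ l in (0 : ℝ)..(1 / 2), (l - l ^ 3 - 4 * l ^ 5 - 2 * l ^ 7)) = 301 / 3072 := by
    have hderiv : ∀ x ∈ Set.uIcc (0 : ℝ) (1 / 2),
        HasDerivAt (fun t : ℝ => t ^ 2 / 2 - t ^ 4 / 4 - 2 / 3 * t ^ 6 - t ^ 8 / 4)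
          (x - x ^ 3 - 4 * x ^ 5 - 2 * x ^ 7) x := by
      intro x _
      have h := (((hasDerivAt_pow 2 x).div_const 2).sub ((hasDerivAt_pow 4 x).div_const 4)).sub
        (((hasDerivAt_pow 6 x).const_mul (2 / 3 : ℝ)).sub ((hasDerivAt_pow 8 x).div_const 4).neg)
      refine (h.congr_deriv ?_).congr_of_eventuallyEq (Filter.Eventually.of_forall fun t => ?_)
      all_goals simp only [Pi.sub_apply, Pi.neg_apply, Nat.cast_ofNat]; ring
    rw [intervalIntegral.integral_eq_sub_of_hasDerivAt hderiv
      (by apply Continuous.intervalIntegrable; continuity)]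
    norm_num
  linarith

/-- For `r_e = 1`, `r_c = 1/2` (`ρ = 0.5`), the expected coverage proportion under
uniformly distributed endpoints strictly exceeds that under uniformly distributed
midpoints. -/
theorem UDE_gt_UDM_at_half :
    (1 / (2 * π)) * (∫ b in (2 * π / 3)..(4 * π / 3),
        Real.sqrt ((1 / 4 - (1 + cos b) / 2) / (1 - (1 + cos b) / 2))) >
      ∫ l in (0 : ℝ)..(1 / 2), 2 * l * Real.sqrt ((1 / 4 - l ^ 2) / (1 - l ^ 2)) := by
  have hπ := Real.pi_pos
  have hL : (∫ b in (2 * π / 3)..(4 * π / 3),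
      Real.sqrt ((1 / 4 - (1 + cos b) / 2) / (1 - (1 + cos b) / 2)))
      = ∫ x in (8 * π / 12)..(16 * π / 12), fE x := by
    have e1 : 2 * π / 3 = 8 * π / 12 := by ring
    have e2 : 4 * π / 3 = 16 * π / 12 := by ring
    rw [e1, e2]
    simp only [fE]
  rw [hL]
  have hge := lhs_integral_ge
  have hle := rhs_integral_le
  have hpos : (0 : ℝ) < 1 / (2 * π) := by positivity
  have : (2555 / 1000 : ℝ) / 24 ≤ (1 / (2 * π)) * ∫ x in (8 * π / 12)..(16 * π / 12), fE x := by
    calc (2555 / 1000 : ℝ) / 24 = (1 / (2 * π)) * ((2555 / 1000) * (π / 12)) := by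
          field_simp; ring
      _ ≤ _ := by
          apply mul_le_mul_of_nonneg_left hge (le_of_lt hpos)
  have hnum : (301 : ℝ) / 3072 < (2555 / 1000 : ℝ) / 24 := by norm_num
  linarith
end

section
/- For r_e = 1 and r_c = 9/10, the expected coverage proportion under uniformly distributed midpoints strictly exceeds that under uniformly distributed endpoints: (1/(2π)) ∫_{π−2·arcsin(9/10)}^{π+2·arcsin(9/10)} √((81/100 − (1+cos b)/2)/(1 − (1+cos b)/2)) db < ∫₀^{9/10} 2l·√((81/100 − l²)/(1 − l²)) dl. -/
set_option maxHeartbeats 1000000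


open Real

private lemma deriv_term (n : ℕ) {l : ℝ} (h : 0 < 81/100 - l^2) :
    HasDerivAt (fun y : ℝ => (81/100 - y^2)^(n+1) * Real.sqrt (81/100 - y^2))
      (-(2*(n:ℝ)+3) * l * (81/100 - l^2)^n * Real.sqrt (81/100 - l^2)) l := by
  have hne : (81/100 - l^2) ≠ 0 := ne_of_gt h
  have h1 : HasDerivAt (fun y : ℝ => 81/100 - y^2) (-(2*l)) l := by
    simpa using (hasDerivAt_pow 2 l).const_sub (81/100 : ℝ)
  have h4 := (h1.pow (n+1)).mul (h1.sqrt hne)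
  refine h4.congr_deriv ?_
  simp only [Pi.pow_apply]
  have hs : Real.sqrt (81/100 - l^2) ≠ 0 := Real.sqrt_ne_zero'.mpr (by linarith)
  have hs2 : Real.sqrt (81/100 - l^2) ^ 2 = 81/100 - l^2 := Real.sq_sqrt h.le
  generalize hu : (81:ℝ)/100 - l^2 = u at *
  generalize hsv : Real.sqrt u = s at *
  push_cast
  rw [← hs2]
  field_simp
  ring

/-- antiderivative of `2 l √(81/100 - l²) (p0 + p1 l² + p2 l⁴)` -/
noncomputable def Gfun (p0 p1 p2 l : ℝ) : ℝ :=
  -(2/3)*(p0 + p1*(81/100) + p2*(81/100)^2) * ((81/100 - l^2)^1 * Real.sqrt (81/100 - l^2))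
  + (2/5)*(p1 + 2*(81/100)*p2) * ((81/100 - l^2)^2 * Real.sqrt (81/100 - l^2))
  - (2/7)*p2 * ((81/100 - l^2)^3 * Real.sqrt (81/100 - l^2))

private lemma piece_deriv (p0 p1 p2 l : ℝ) (h : 0 < 81/100 - l^2) :
    HasDerivAt (Gfun p0 p1 p2)
      (2*l*Real.sqrt (81/100 - l^2) * (p0 + p1*l^2 + p2*l^4)) l := by
  have d0 := (deriv_term 0 h).const_mul (-(2/3)*(p0 + p1*(81/100) + p2*(81/100)^2))
  have d1 := (deriv_term 1 h).const_mul ((2/5)*(p1 + 2*(81/100)*p2))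
  have d2 := (deriv_term 2 h).const_mul ((2/7)*p2)
  have := (d0.add d1).sub d2
  refine this.congr_deriv ?_
  push_cast
  ring

private lemma piece_integral (p0 p1 p2 la lb : ℝ) (h0 : 0 ≤ la) (hab : la ≤ lb)
    (hb : lb^2 ≤ 4/5) :
    ∫ l in la..lb, 2*l*Real.sqrt (81/100 - l^2) * (p0 + p1*l^2 + p2*l^4)
      = Gfun p0 p1 p2 lb - Gfun p0 p1 p2 la := by
  apply intervalIntegral.integral_eq_sub_of_hasDerivAt
  · intro l hl
    rw [Set.uIcc_of_le hab] at hl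
    apply piece_deriv
    nlinarith [hl.1, hl.2, sq_nonneg l]
  · apply Continuous.intervalIntegrable
    have : Continuous fun l : ℝ => 81/100 - l^2 := by continuity
    continuity

private lemma pointwise_bound (p0 p1 p2 l : ℝ) (hl0 : 0 ≤ l) (hl2 : l^2 ≤ 4/5)
    (hP0 : 0 ≤ p0 + p1*l^2 + p2*l^4)
    (hP1 : (p0 + p1*l^2 + p2*l^4)^2 * (1 - l^2) ≤ 1) :
    2*l*Real.sqrt (81/100 - l^2) * (p0 + p1*l^2 + p2*l^4)
      ≤ 2*l*Real.sqrt ((81/100 - l^2) / (1 - l^2)) := by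
  have ht2 : 0 < 1 - l^2 := by nlinarith
  have hnum : 0 ≤ 81/100 - l^2 := by nlinarith
  rw [Real.sqrt_div hnum]
  set W := p0 + p1*l^2 + p2*l^4 with hW
  set t := Real.sqrt (1 - l^2) with htdef
  have ht : 0 < t := Real.sqrt_pos.mpr ht2
  have ht2' : t^2 = 1 - l^2 := Real.sq_sqrt ht2.le
  have h3 : (W*t)^2 ≤ 1 := by rw [mul_pow, ht2']; exact hP1
  have hWt : W * t ≤ 1 := by nlinarith [mul_nonneg hP0 ht.le]
  have hW' : W ≤ 1 / t := (le_div_iff₀ ht).mpr (by linarith)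
  calc 2*l*Real.sqrt (81/100 - l^2) * W
      ≤ 2*l*Real.sqrt (81/100 - l^2) * (1/t) :=
        mul_le_mul_of_nonneg_left hW' (by positivity)
    _ = 2*l*(Real.sqrt (81/100 - l^2) / t) := by ring


private lemma poly1_nonneg (x : ℝ) (h1 : 0 ≤ x) (h2 : x ≤ 45/100) :
    0 ≤ 49849/50000 + 42019/100000*x + 74891/100000*x^2 := by nlinarith
private lemma poly1_le (x : ℝ) (h1 : 0 ≤ x) (h2 : x ≤ 45/100) :
    (49849/50000 + 42019/100000*x + 74891/100000*x^2)^2 * (1 - x) ≤ 1 := by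
  nlinarith [mul_nonneg h1 (by linarith : (0:ℝ) ≤ 45/100 - x), sq_nonneg (x - 1/5),
    sq_nonneg (x - 2/5), mul_nonneg (mul_nonneg h1 h1) (by linarith : (0:ℝ) ≤ 45/100 - x),
    mul_nonneg (mul_nonneg h1 (by linarith : (0:ℝ) ≤ 45/100 - x)) (sq_nonneg (x - 1/5))]
private lemma poly2_nonneg (x : ℝ) (h1 : 45/100 ≤ x) (h2 : x ≤ 65/100) :
    0 ≤ 14181/10000 + (-144581/100000)*x + 71221/25000*x^2 := by nlinarith [sq_nonneg x]
private lemma poly2_le (x : ℝ) (h1 : 45/100 ≤ x) (h2 : x ≤ 65/100) :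
    (14181/10000 + (-144581/100000)*x + 71221/25000*x^2)^2 * (1 - x) ≤ 1 := by
  nlinarith [mul_nonneg (by linarith : (0:ℝ) ≤ x - 45/100) (by linarith : (0:ℝ) ≤ 65/100 - x),
    sq_nonneg (x - 55/100),
    mul_nonneg (mul_nonneg (by linarith : (0:ℝ) ≤ x - 45/100)
      (by linarith : (0:ℝ) ≤ 65/100 - x)) (sq_nonneg (x - 55/100)),
    mul_nonneg (mul_nonneg (by linarith : (0:ℝ) ≤ x - 45/100)
      (by linarith : (0:ℝ) ≤ 65/100 - x)) (by linarith : (0:ℝ) ≤ x - 45/100)]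
private lemma poly3_nonneg (x : ℝ) (h1 : 65/100 ≤ x) (h2 : x ≤ 8/10) :
    0 ≤ 451913/100000 + (-1081513/100000)*x + 61997/6250*x^2 := by nlinarith [sq_nonneg (x - 55/100)]
private lemma poly3_le (x : ℝ) (h1 : 65/100 ≤ x) (h2 : x ≤ 8/10) :
    (451913/100000 + (-1081513/100000)*x + 61997/6250*x^2)^2 * (1 - x) ≤ 1 := by
  nlinarith [mul_nonneg (by linarith : (0:ℝ) ≤ x - 65/100) (by linarith : (0:ℝ) ≤ 8/10 - x),
    sq_nonneg (x - 7/10),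
    mul_nonneg (mul_nonneg (by linarith : (0:ℝ) ≤ x - 65/100)
      (by linarith : (0:ℝ) ≤ 8/10 - x)) (sq_nonneg (x - 7/10)),
    mul_nonneg (mul_nonneg (by linarith : (0:ℝ) ≤ x - 65/100)
      (by linarith : (0:ℝ) ≤ 8/10 - x)) (by linarith : (0:ℝ) ≤ x - 65/100)]

private lemma lhs_poly (c : ℝ) (h1 : -1 ≤ c) (h2 : c ≤ 62/100) :
    81/100 - (1 + c)/2 ≤ (4027/5000 - 77/625 * c)^2 * (1 - (1 + c)/2) := by
  nlinarith [mul_nonneg (mul_nonneg (by linarith : (0:ℝ) ≤ c + 1)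
      (by linarith : (0:ℝ) ≤ 62/100 - c)) (sq_nonneg (c + 345/1000)),
    sq_nonneg (c + 345/1000),
    mul_nonneg (by linarith : (0:ℝ) ≤ c + 1) (by linarith : (0:ℝ) ≤ 62/100 - c)]

private lemma sin98 : (9:ℝ)/10 ≤ Real.sin (9/8) := by
  have h38 : |(3:ℝ)/8| ≤ 1 := by rw [abs_of_nonneg (by norm_num)]; norm_num
  have hb := Real.sin_bound h38
  rw [abs_of_nonneg (by norm_num : (0:ℝ) ≤ 3/8), abs_le] at hb
  have h1 : (47865:ℝ)/131072 ≤ Real.sin (3/8) := by nlinarith [hb.1]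
  have h2 : Real.sin (3/8) ≤ (48135:ℝ)/131072 := by nlinarith [hb.2]
  rw [show (9:ℝ)/8 = 3 * (3/8) by norm_num, Real.sin_three_mul]
  nlinarith [h1, h2, sq_nonneg (Real.sin (3/8) - 47865/131072)]

/-- For `r_e = 1`, `r_c = 9/10` (`ρ = 0.9`), the expected coverage proportion under
uniformly distributed midpoints strictly exceeds that under uniformly distributed
endpoints. -/
theorem UDE_lt_UDM_at_nine_tenths :
    (1 / (2 * π)) * (∫ b in (π - 2 * arcsin (9 / 10))..(π + 2 * arcsin (9 / 10)),
        Real.sqrt ((81 / 100 - (1 + cos b) / 2) / (1 - (1 + cos b) / 2))) <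
      ∫ l in (0 : ℝ)..(9 / 10), 2 * l * Real.sqrt ((81 / 100 - l ^ 2) / (1 - l ^ 2)) := by
  have hπ : (0:ℝ) < π := Real.pi_pos
  set θ : ℝ := arcsin (9/10) with hθdef
  -- basic facts about θ
  have hθ0 : 0 ≤ θ := Real.arcsin_nonneg.mpr (by norm_num)
  have hθπ2 : θ ≤ π/2 := Real.arcsin_le_pi_div_two _
  have hsin98 : (9:ℝ)/10 ≤ Real.sin (9/8) := sin98
  have hθub : θ ≤ 9/8 := by
    refine (Real.arcsin_le_iff_le_sin (by norm_num) ⟨?_, by nlinarith [Real.pi_gt_three]⟩).mpr hsin98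
    nlinarith [Real.pi_gt_three]
  -- cos b is at most 62/100 on the interval
  have hcb : ∀ b ∈ Set.Icc (π - 2*θ) (π + 2*θ), Real.cos b ≤ 62/100 := by
    intro b hb
    have habs : |b - π| ≤ 2*θ := abs_le.mpr ⟨by linarith [hb.1], by linarith [hb.2]⟩
    have hmono : Real.cos (2*θ) ≤ Real.cos (b - π) := by
      rw [← Real.cos_abs (b - π)]
      exact Real.cos_le_cos_of_nonneg_of_le_pi (abs_nonneg _) (by linarith) habs
    have hc2θ : Real.cos (2*θ) = -(62/100) := by
      rw [Real.cos_two_mul, hθdef, Real.cos_arcsin,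
        Real.sq_sqrt (by norm_num : (0:ℝ) ≤ 1 - (9/10:ℝ)^2)]
      norm_num
    have hbπ : Real.cos (b - π) = -Real.cos b := by
      rw [Real.cos_sub, Real.cos_pi, Real.sin_pi]; ring
    rw [hc2θ, hbπ] at hmono
    linarith
  have hab : π - 2*θ ≤ π + 2*θ := by linarith
  -- pointwise bound for the LHS integrand
  have hkey : ∀ b ∈ Set.Icc (π - 2*θ) (π + 2*θ),
      Real.sqrt ((81/100 - (1 + Real.cos b)/2) / (1 - (1 + Real.cos b)/2))
        ≤ 4027/5000 - 77/625 * Real.cos b := by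
    intro b hb
    have hc := hcb b hb
    have hcl : -1 ≤ Real.cos b := Real.neg_one_le_cos b
    have hden : (0:ℝ) < 1 - (1 + Real.cos b)/2 := by linarith
    have hA : (0:ℝ) ≤ 4027/5000 - 77/625 * Real.cos b := by nlinarith
    have hle : (81/100 - (1 + Real.cos b)/2) / (1 - (1 + Real.cos b)/2)
        ≤ (4027/5000 - 77/625 * Real.cos b)^2 := by
      rw [div_le_iff₀ hden]
      exact lhs_poly _ hcl hc
    calc Real.sqrt ((81/100 - (1 + Real.cos b)/2) / (1 - (1 + Real.cos b)/2))
        ≤ Real.sqrt ((4027/5000 - 77/625 * Real.cos b)^2) := Real.sqrt_le_sqrt hle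
      _ = 4027/5000 - 77/625 * Real.cos b := Real.sqrt_sq hA
  -- integrability of the LHS integrand
  have hgcont : ContinuousOn
      (fun b => Real.sqrt ((81/100 - (1 + Real.cos b)/2) / (1 - (1 + Real.cos b)/2)))
      (Set.uIcc (π - 2*θ) (π + 2*θ)) := by
    rw [Set.uIcc_of_le hab]
    apply ContinuousOn.sqrt
    apply ContinuousOn.div (by fun_prop) (by fun_prop)
    intro b hb
    have := hcb b hb
    intro hzero
    nlinarith
  -- compare the LHS integral with the linear upper bound
  have hmonoL : (∫ b in (π - 2*θ)..(π + 2*θ),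
        Real.sqrt ((81/100 - (1 + Real.cos b)/2) / (1 - (1 + Real.cos b)/2)))
      ≤ ∫ b in (π - 2*θ)..(π + 2*θ), (4027/5000 - 77/625 * Real.cos b) := by
    apply intervalIntegral.integral_mono_on hab (hgcont.intervalIntegrable)
      (intervalIntegrable_const.sub (intervalIntegral.intervalIntegrable_cos.const_mul _))
    exact hkey
  have heval : (∫ b in (π - 2*θ)..(π + 2*θ), (4027/5000 - 77/625 * Real.cos b))
      = 4027/5000 * (4*θ) + 77/625 * (2 * Real.sin (2*θ)) := by
    rw [intervalIntegral.integral_sub intervalIntegrable_const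
      (intervalIntegral.intervalIntegrable_cos.const_mul _),
      intervalIntegral.integral_const, intervalIntegral.integral_const_mul,
      integral_cos]
    have h1 : Real.sin (π + 2*θ) = -Real.sin (2*θ) := by rw [Real.sin_add]; simp
    have h2 : Real.sin (π - 2*θ) = Real.sin (2*θ) := Real.sin_pi_sub _
    rw [h1, h2, smul_eq_mul]
    ring
  have hsin2ub : Real.sin (2*θ) ≤ 39231/50000 := by
    rw [Real.sin_two_mul, hθdef, Real.sin_arcsin (by norm_num) (by norm_num), Real.cos_arcsin]
    have : Real.sqrt (1 - (9/10:ℝ)^2) ≤ 4359/10000 := by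
      rw [show (1:ℝ) - (9/10)^2 = 19/100 by norm_num]
      calc Real.sqrt (19/100) ≤ Real.sqrt ((4359/10000)^2) := Real.sqrt_le_sqrt (by norm_num)
        _ = 4359/10000 := Real.sqrt_sq (by norm_num)
    nlinarith [this]
  have hIub : (∫ b in (π - 2*θ)..(π + 2*θ),
        Real.sqrt ((81/100 - (1 + Real.cos b)/2) / (1 - (1 + Real.cos b)/2)))
      ≤ 119300949/31250000 := by
    calc (∫ b in (π - 2*θ)..(π + 2*θ),
        Real.sqrt ((81/100 - (1 + Real.cos b)/2) / (1 - (1 + Real.cos b)/2)))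
        ≤ 4027/5000 * (4*θ) + 77/625 * (2 * Real.sin (2*θ)) := heval ▸ hmonoL
      _ ≤ 119300949/31250000 := by nlinarith [hθub, hsin2ub]
  have hLfinal : (1/(2*π)) * (∫ b in (π - 2*θ)..(π + 2*θ),
        Real.sqrt ((81/100 - (1 + Real.cos b)/2) / (1 - (1 + Real.cos b)/2)))
      < 673106465557/1093750000000 := by
    have h1 : (1/(2*π)) * (∫ b in (π - 2*θ)..(π + 2*θ),
          Real.sqrt ((81/100 - (1 + Real.cos b)/2) / (1 - (1 + Real.cos b)/2)))
        ≤ (1/(2*π)) * (119300949/31250000) :=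
      mul_le_mul_of_nonneg_left hIub (by positivity)
    have hπ' : π > 3.141592 := Real.pi_gt_d6
    have h2 : (1/(2*π)) * (119300949/31250000) < 673106465557/1093750000000 := by
      rw [one_div, inv_mul_eq_div]
      calc (119300949/31250000 : ℝ)/(2*π) < (119300949/31250000)/(6283184/1000000) := by
            apply div_lt_div_of_pos_left (by norm_num) (by norm_num)
            linarith
        _ < 673106465557/1093750000000 := by norm_num
    linarith
  -- RHS: split points
  set a1 : ℝ := Real.sqrt (45/100) with ha1def
  set a2 : ℝ := Real.sqrt (65/100) with ha2def
  set a3 : ℝ := Real.sqrt (4/5) with ha3def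
  have ha1sq : a1^2 = 45/100 := Real.sq_sqrt (by norm_num)
  have ha2sq : a2^2 = 65/100 := Real.sq_sqrt (by norm_num)
  have ha3sq : a3^2 = 4/5 := Real.sq_sqrt (by norm_num)
  have ha10 : 0 ≤ a1 := Real.sqrt_nonneg _
  have ha20 : 0 ≤ a2 := Real.sqrt_nonneg _
  have ha30 : 0 ≤ a3 := Real.sqrt_nonneg _
  have ha12 : a1 ≤ a2 := Real.sqrt_le_sqrt (by norm_num)
  have ha23 : a2 ≤ a3 := Real.sqrt_le_sqrt (by norm_num)
  have ha39 : a3 ≤ 9/10 := by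
    calc a3 = Real.sqrt (4/5) := rfl
      _ ≤ Real.sqrt ((9/10)^2) := Real.sqrt_le_sqrt (by norm_num)
      _ = 9/10 := Real.sqrt_sq (by norm_num)
  -- continuity of RHS integrand
  have hfc : ContinuousOn (fun l : ℝ => 2 * l * Real.sqrt ((81/100 - l^2)/(1 - l^2)))
      (Set.Icc (0:ℝ) (9/10)) := by
    apply ContinuousOn.mul (by fun_prop)
    apply ContinuousOn.sqrt
    apply ContinuousOn.div (by fun_prop) (by fun_prop)
    intro l hl
    have h1 : l^2 ≤ (9/10:ℝ)^2 := by nlinarith [hl.1, hl.2]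
    intro hzero
    nlinarith
  have hint : ∀ la lb : ℝ, 0 ≤ la → la ≤ lb → lb ≤ 9/10 →
      IntervalIntegrable (fun l : ℝ => 2 * l * Real.sqrt ((81/100 - l^2)/(1 - l^2)))
        MeasureTheory.volume la lb := by
    intro la lb h0 h1 h2
    apply ContinuousOn.intervalIntegrable
    apply hfc.mono
    rw [Set.uIcc_of_le h1]
    exact Set.Icc_subset_Icc h0 h2
  -- lower bounds for the three pieces
  have hq1 : (∫ l in (0:ℝ)..a1,
        2*l*Real.sqrt (81/100 - l^2) * (49849/50000 + 42019/100000*l^2 + 74891/100000*l^4))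
      ≤ ∫ l in (0:ℝ)..a1, 2 * l * Real.sqrt ((81/100 - l^2)/(1 - l^2)) := by
    have hcq : Continuous (fun l : ℝ => 2*l*Real.sqrt (81/100 - l^2) * (49849/50000 + 42019/100000*l^2 + 74891/100000*l^4)) := by fun_prop
    apply intervalIntegral.integral_mono_on ha10
      (hcq.intervalIntegrable _ _) (hint 0 a1 le_rfl ha10 (by linarith))
    intro l hl
    have hx1 : l^2 ≤ 45/100 := ha1sq ▸ pow_le_pow_left₀ hl.1 hl.2 2
    have hx0 : 0 ≤ l^2 := sq_nonneg l
    exact pointwise_bound _ _ _ _ hl.1 (by linarith)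
      (by rw [show l^4 = (l^2)^2 by ring]; exact poly1_nonneg _ hx0 hx1)
      (by rw [show l^4 = (l^2)^2 by ring]; exact poly1_le _ hx0 hx1)
  have hq2 : (∫ l in a1..a2,
        2*l*Real.sqrt (81/100 - l^2) * (14181/10000 + (-144581/100000)*l^2 + 71221/25000*l^4))
      ≤ ∫ l in a1..a2, 2 * l * Real.sqrt ((81/100 - l^2)/(1 - l^2)) := by
    have hcq : Continuous (fun l : ℝ => 2*l*Real.sqrt (81/100 - l^2) * (14181/10000 + (-144581/100000)*l^2 + 71221/25000*l^4)) := by fun_prop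
    apply intervalIntegral.integral_mono_on ha12
      (hcq.intervalIntegrable _ _) (hint a1 a2 ha10 ha12 (by linarith))
    intro l hl
    have hl0 : 0 ≤ l := le_trans ha10 hl.1
    have hx1 : l^2 ≤ 65/100 := ha2sq ▸ pow_le_pow_left₀ hl0 hl.2 2
    have hx2 : 45/100 ≤ l^2 := ha1sq ▸ pow_le_pow_left₀ ha10 hl.1 2
    exact pointwise_bound _ _ _ _ hl0 (by linarith)
      (by rw [show l^4 = (l^2)^2 by ring]; exact poly2_nonneg _ hx2 hx1)
      (by rw [show l^4 = (l^2)^2 by ring]; exact poly2_le _ hx2 hx1)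
  have hq3 : (∫ l in a2..a3,
        2*l*Real.sqrt (81/100 - l^2) * (451913/100000 + (-1081513/100000)*l^2 + 61997/6250*l^4))
      ≤ ∫ l in a2..a3, 2 * l * Real.sqrt ((81/100 - l^2)/(1 - l^2)) := by
    have hcq : Continuous (fun l : ℝ => 2*l*Real.sqrt (81/100 - l^2) * (451913/100000 + (-1081513/100000)*l^2 + 61997/6250*l^4)) := by fun_prop
    apply intervalIntegral.integral_mono_on ha23
      (hcq.intervalIntegrable _ _) (hint a2 a3 ha20 ha23 (by linarith))
    intro l hl
    have hl0 : 0 ≤ l := le_trans ha20 hl.1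
    have hx1 : l^2 ≤ 4/5 := ha3sq ▸ pow_le_pow_left₀ hl0 hl.2 2
    have hx2 : 65/100 ≤ l^2 := ha2sq ▸ pow_le_pow_left₀ ha20 hl.1 2
    exact pointwise_bound _ _ _ _ hl0 hx1
      (by rw [show l^4 = (l^2)^2 by ring]; exact poly3_nonneg _ hx2 (by linarith))
      (by rw [show l^4 = (l^2)^2 by ring]; exact poly3_le _ hx2 (by linarith))
  -- evaluate the polynomial-piece integrals
  have hu0 : (81:ℝ)/100 - (0:ℝ)^2 = 81/100 := by norm_num
  have hu1 : (81:ℝ)/100 - a1^2 = 36/100 := by rw [ha1sq]; norm_num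
  have hu2 : (81:ℝ)/100 - a2^2 = 16/100 := by rw [ha2sq]; norm_num
  have hu3 : (81:ℝ)/100 - a3^2 = 1/100 := by rw [ha3sq]; norm_num
  have hs0 : Real.sqrt ((81:ℝ)/100 - (0:ℝ)^2) = 9/10 := by
    rw [hu0, show (81:ℝ)/100 = (9/10)^2 by norm_num, Real.sqrt_sq (by norm_num)]
  have hs1 : Real.sqrt ((81:ℝ)/100 - a1^2) = 6/10 := by
    rw [hu1, show (36:ℝ)/100 = (6/10)^2 by norm_num, Real.sqrt_sq (by norm_num)]
  have hs2 : Real.sqrt ((81:ℝ)/100 - a2^2) = 4/10 := by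
    rw [hu2, show (16:ℝ)/100 = (4/10)^2 by norm_num, Real.sqrt_sq (by norm_num)]
  have hs3 : Real.sqrt ((81:ℝ)/100 - a3^2) = 1/10 := by
    rw [hu3, show (1:ℝ)/100 = (1/10)^2 by norm_num, Real.sqrt_sq (by norm_num)]
  have hv1 : (∫ l in (0:ℝ)..a1,
        2*l*Real.sqrt (81/100 - l^2) * (49849/50000 + 42019/100000*l^2 + 74891/100000*l^4))
      = 846047023911/2187500000000 := by
    rw [piece_integral _ _ _ _ _ le_rfl ha10 (by rw [ha1sq]; norm_num)]
    simp only [Gfun]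
    rw [hs0, hs1, hu0, hu1]
    norm_num
  have hv2 : (∫ l in a1..a2,
        2*l*Real.sqrt (81/100 - l^2) * (14181/10000 + (-144581/100000)*l^2 + 71221/25000*l^4))
      = 20547249671/136718750000 := by
    rw [piece_integral _ _ _ _ _ ha10 ha12 (by rw [ha2sq]; norm_num)]
    simp only [Gfun]
    rw [hs1, hs2, hu1, hu2]
    norm_num
  have hv3 : (∫ l in a2..a3,
        2*l*Real.sqrt (81/100 - l^2) * (451913/100000 + (-1081513/100000)*l^2 + 61997/6250*l^4))
      = 171409912467/2187500000000 := by
    rw [piece_integral _ _ _ _ _ ha20 ha23 ha3sq.le]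
    simp only [Gfun]
    rw [hs2, hs3, hu2, hu3]
    norm_num
  -- split the RHS integral
  have e1 := intervalIntegral.integral_add_adjacent_intervals
    (hint 0 a1 le_rfl ha10 (by linarith)) (hint a1 a2 ha10 ha12 (by linarith))
  have e2 := intervalIntegral.integral_add_adjacent_intervals
    (hint 0 a2 le_rfl ha20 (by linarith)) (hint a2 a3 ha20 ha23 (by linarith))
  have e3 := intervalIntegral.integral_add_adjacent_intervals
    (hint 0 a3 le_rfl ha30 (by linarith)) (hint a3 (9/10) ha30 ha39 le_rfl)
  have htail : 0 ≤ ∫ l in a3..(9/10), 2 * l * Real.sqrt ((81/100 - l^2)/(1 - l^2)) := by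
    apply intervalIntegral.integral_nonneg ha39
    intro u hu
    have : 0 ≤ u := le_trans ha30 hu.1
    positivity
  -- assemble
  have hRlb : (673106465557:ℝ)/1093750000000
      ≤ ∫ l in (0:ℝ)..(9/10), 2 * l * Real.sqrt ((81/100 - l^2)/(1 - l^2)) := by
    have b1 := hv1 ▸ hq1
    have b2 := hv2 ▸ hq2
    have b3 := hv3 ▸ hq3
    have : (846047023911:ℝ)/2187500000000 + 20547249671/136718750000 + 171409912467/2187500000000
        = 673106465557/1093750000000 := by norm_num
    linarith [b1, b2, b3, htail, e1, e2, e3]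
  calc (1 / (2*π)) * (∫ b in (π - 2 * arcsin (9/10))..(π + 2 * arcsin (9/10)),
        Real.sqrt ((81/100 - (1 + cos b)/2) / (1 - (1 + cos b)/2)))
      < 673106465557/1093750000000 := by
        convert hLfinal using 4 <;> ring
    _ ≤ ∫ l in (0:ℝ)..(9/10), 2 * l * Real.sqrt ((81/100 - l^2)/(1 - l^2)) := hRlb
end
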